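/- The map bₙ : Bₙ → {0, 1, ..., 2ⁿn!−1} defined by bₙ(π) = Σ_{i=1}^{n} inv_{n−i+1}(π)·2^{i−1}·(i−1)! is a bijection, where inv_i(π) counts the i-inversions of the signed permutation π. -/

import Mathlib

/-- A signed permutation of the coordinates of `ℝⁿ`: it maps `eᵢ` to `(sign i) • e_{toPerm i}`. -/
structure SignedPerm (n : ℕ) where
  toPerm : Equiv.Perm (Fin n)
  sign : Fin n → ℤ
  sign_mem : ∀ i, sign i = 1 ∨ sign i = -1

/-- The `i`-th standard basis vector (with integer coordinates). -/
def stdVec (n : ℕ) (i : Fin n) : Fin n → ℤ := Pi.single i 1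

/-- The positive roots `{e_k, e_i + e_j, e_i - e_j : k ∈ [n], i < j}` of type `Bₙ`. -/
def posRoots (n : ℕ) : Set (Fin n → ℤ) :=
  {v | (∃ k, v = stdVec n k) ∨
    ∃ i j : Fin n, i < j ∧ (v = stdVec n i + stdVec n j ∨ v = stdVec n i - stdVec n j)}

/-- The positive roots `{e_i, e_i + e_j, e_i - e_j : i < j ≤ n}` with first index `i`. -/
def posRootsAt (n : ℕ) (i : Fin n) : Set (Fin n → ℤ) :=
  {v | v = stdVec n i ∨
    ∃ j : Fin n, i < j ∧ (v = stdVec n i + stdVec n j ∨ v = stdVec n i - stdVec n j)}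

/-- The action of `π⁻¹` on vectors: since `π(eᵢ) = (sign i) • e_{toPerm i}`,
we have `(π⁻¹ v) j = (sign j) * v (toPerm j)`. -/
def invAct {n : ℕ} (π : SignedPerm n) (v : Fin n → ℤ) : Fin n → ℤ :=
  fun j => π.sign j * v (π.toPerm j)

/-- The number of `i`-inversions: `inv_i π = #{v ∈ Φ⁺_{n,i} | π⁻¹(v) ∈ -Φ⁺ₙ}`. -/
noncomputable def invAt {n : ℕ} (π : SignedPerm n) (i : Fin n) : ℕ :=
  Set.ncard {v ∈ posRootsAt n i | -(invAct π v) ∈ posRoots n}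

lemma stdVec_apply {n : ℕ} (i j : Fin n) : stdVec n i j = if j = i then 1 else 0 :=
  Pi.single_apply i 1 j

lemma ite_mul_helper (P : Prop) [Decidable P] (c d : ℤ) (h : c * (if P then 1 else 0) = d)
    (hd : d ≠ 0) : P ∧ c = d := by
  split at h
  · exact ⟨‹P›, by omega⟩
  · simp at h; omega

lemma single_mem_iff {n : ℕ} (p : Fin n) {c : ℤ} (hc : c = 1 ∨ c = -1) :
    (c • stdVec n p) ∈ posRoots n ↔ c = 1 := by
  constructor
  · rintro (⟨k, hk⟩ | ⟨a, b, hab, h | h⟩)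
    · have h2 := congrFun hk k
      simp only [Pi.smul_apply, smul_eq_mul, stdVec_apply, if_pos rfl] at h2
      exact (ite_mul_helper _ _ _ h2 one_ne_zero).2
    · have h1 := congrFun h a
      have h2 := congrFun h b
      simp only [Pi.smul_apply, smul_eq_mul, stdVec_apply, Pi.add_apply, if_pos rfl,
        if_neg hab.ne, if_neg hab.ne'] at h1 h2
      rw [add_zero] at h1; rw [zero_add] at h2
      obtain ⟨hap, -⟩ := ite_mul_helper _ _ _ h1 one_ne_zero
      obtain ⟨hbp, -⟩ := ite_mul_helper _ _ _ h2 one_ne_zero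
      exact absurd (hap.trans hbp.symm) hab.ne
    · have h1 := congrFun h a
      have h2 := congrFun h b
      simp only [Pi.smul_apply, smul_eq_mul, stdVec_apply, Pi.sub_apply, if_pos rfl,
        if_neg hab.ne, if_neg hab.ne'] at h1 h2
      rw [sub_zero] at h1; rw [zero_sub] at h2
      obtain ⟨hap, -⟩ := ite_mul_helper _ _ _ h1 one_ne_zero
      obtain ⟨hbp, -⟩ := ite_mul_helper _ _ _ h2 (by norm_num)
      exact absurd (hap.trans hbp.symm) hab.ne
  · rintro rfl
    exact Or.inl ⟨p, by simp⟩

lemma pair_mem_iff {n : ℕ} {p q : Fin n} (hpq : p ≠ q) {c d : ℤ}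
    (hc : c = 1 ∨ c = -1) (hd : d = 1 ∨ d = -1) :
    (c • stdVec n p + d • stdVec n q) ∈ posRoots n ↔ (if p < q then c = 1 else d = 1) := by
  have hc0 : c ≠ 0 := by rcases hc with h | h <;> simp [h]
  have hd0 : d ≠ 0 := by rcases hd with h | h <;> simp [h]
  constructor
  · rintro (⟨k, hk⟩ | ⟨a, b, hab, h | h⟩)
    · exfalso
      have hp := congrFun hk p
      have hq := congrFun hk q
      simp only [Pi.add_apply, Pi.smul_apply, smul_eq_mul, stdVec_apply, eq_self_iff_true, if_true,
        if_neg hpq, if_neg (Ne.symm hpq), mul_one, mul_zero, add_zero, zero_add] at hp hq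
      -- hp : c = if p = k then 1 else 0, hq : d = if q = k then 1 else 0
      have h1 : p = k := by by_contra hcon; rw [if_neg hcon] at hp; exact hc0 hp
      have h2 : q = k := by by_contra hcon; rw [if_neg hcon] at hq; exact hd0 hq
      exact hpq (h1.trans h2.symm)
    · have hp := congrFun h p
      have hq := congrFun h q
      simp only [Pi.add_apply, Pi.smul_apply, smul_eq_mul, stdVec_apply, eq_self_iff_true, if_true,
        if_neg hpq, if_neg (Ne.symm hpq), mul_one, mul_zero, add_zero, zero_add] at hp hq
      have hPab : p = a ∨ p = b := by
        by_contra hcon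
        push_neg at hcon
        rw [if_neg hcon.1, if_neg hcon.2] at hp
        exact hc0 (by omega)
      have hQab : q = a ∨ q = b := by
        by_contra hcon
        push_neg at hcon
        rw [if_neg hcon.1, if_neg hcon.2] at hq
        exact hd0 (by omega)
      rcases hPab with hpa | hpb
      · have hqb : q = b := by
          rcases hQab with hqa | hqb
          · exact absurd (hpa.trans hqa.symm) hpq
          · exact hqb
        subst hpa; subst hqb
        rw [if_pos hab]
        simp only [eq_self_iff_true, if_true, if_neg hab.ne] at hp
        omega
      · have hqa : q = a := by
          rcases hQab with hqa | hqb
          · exact hqa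
          · exact absurd (hpb.trans hqb.symm) hpq
        subst hpb; subst hqa
        rw [if_neg (asymm hab)]
        simp only [eq_self_iff_true, if_true, if_neg hab.ne] at hq
        omega
    · have hp := congrFun h p
      have hq := congrFun h q
      simp only [Pi.sub_apply, Pi.add_apply, Pi.smul_apply, smul_eq_mul, stdVec_apply, eq_self_iff_true,
        if_true, if_neg hpq, if_neg (Ne.symm hpq), mul_one, mul_zero, add_zero, sub_zero, zero_add,
        zero_sub] at hp hq
      have hPab : p = a ∨ p = b := by
        by_contra hcon
        push_neg at hcon
        rw [if_neg hcon.1, if_neg hcon.2] at hp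
        exact hc0 (by omega)
      have hQab : q = a ∨ q = b := by
        by_contra hcon
        push_neg at hcon
        rw [if_neg hcon.1, if_neg hcon.2] at hq
        exact hd0 (by omega)
      rcases hPab with hpa | hpb
      · have hqb : q = b := by
          rcases hQab with hqa | hqb
          · exact absurd (hpa.trans hqa.symm) hpq
          · exact hqb
        subst hpa; subst hqb
        rw [if_pos hab]
        simp only [eq_self_iff_true, if_true, if_neg hab.ne] at hp
        omega
      · have hqa : q = a := by
          rcases hQab with hqa | hqb
          · exact hqa
          · exact absurd (hpb.trans hqb.symm) hpq
        subst hpb; subst hqa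
        rw [if_neg (asymm hab)]
        simp only [eq_self_iff_true, if_true, if_neg hab.ne] at hq
        omega
  · intro hgoal
    rcases lt_or_gt_of_ne hpq with hlt | hgt
    · rw [if_pos hlt] at hgoal
      subst hgoal
      rcases hd with rfl | rfl
      · exact Or.inr ⟨p, q, hlt, Or.inl (by funext m; simp only [Pi.add_apply, Pi.sub_apply, Pi.smul_apply, smul_eq_mul, stdVec_apply]; split_ifs <;> ring)⟩
      · exact Or.inr ⟨p, q, hlt, Or.inr (by funext m; simp only [Pi.add_apply, Pi.sub_apply, Pi.smul_apply, smul_eq_mul, stdVec_apply]; split_ifs <;> ring)⟩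
    · rw [if_neg (asymm hgt)] at hgoal
      subst hgoal
      rcases hc with rfl | rfl
      · exact Or.inr ⟨q, p, hgt, Or.inl (by funext m; simp only [Pi.add_apply, Pi.sub_apply, Pi.smul_apply, smul_eq_mul, stdVec_apply]; split_ifs <;> ring)⟩
      · exact Or.inr ⟨q, p, hgt, Or.inr (by funext m; simp only [Pi.add_apply, Pi.sub_apply, Pi.smul_apply, smul_eq_mul, stdVec_apply]; split_ifs <;> ring)⟩

lemma invAct_stdVec {n : ℕ} (π : SignedPerm n) (i : Fin n) :
    invAct π (stdVec n i) = π.sign (π.toPerm⁻¹ i) • stdVec n (π.toPerm⁻¹ i) := by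
  funext m
  simp only [invAct, Pi.smul_apply, smul_eq_mul, stdVec_apply, Equiv.Perm.inv_def]
  rcases eq_or_ne m (π.toPerm.symm i) with rfl | hm
  · simp
  · rw [if_neg hm, if_neg (fun h => hm (by rw [← h]; simp)), mul_zero, mul_zero]

lemma invAct_add {n : ℕ} (π : SignedPerm n) (v w : Fin n → ℤ) :
    invAct π (v + w) = invAct π v + invAct π w := by
  funext m; simp [invAct, mul_add]

lemma invAct_sub {n : ℕ} (π : SignedPerm n) (v w : Fin n → ℤ) :
    invAct π (v - w) = invAct π v - invAct π w := by
  funext m; simp [invAct, mul_sub]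

lemma stdVec_ne_add {n : ℕ} {i j : Fin n} (hij : i ≠ j) :
    stdVec n i ≠ stdVec n i + stdVec n j := by
  intro h
  have := congrFun h j
  simp [stdVec_apply, Ne.symm hij] at this

lemma stdVec_ne_sub {n : ℕ} {i j : Fin n} (hij : i ≠ j) :
    stdVec n i ≠ stdVec n i - stdVec n j := by
  intro h
  have := congrFun h j
  simp [stdVec_apply, Ne.symm hij] at this

lemma add_ne_sub {n : ℕ} {i j j' : Fin n} (hj : j ≠ i) :
    stdVec n i + stdVec n j ≠ stdVec n i - stdVec n j' := by
  intro h
  have := congrFun h j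
  simp only [Pi.add_apply, Pi.sub_apply, stdVec_apply, if_neg hj, eq_self_iff_true, if_true] at this
  split_ifs at this <;> omega

lemma add_inj {n : ℕ} {i j j' : Fin n} (hj : j ≠ i) (h : stdVec n i + stdVec n j = stdVec n i + stdVec n j') :
    j = j' := by
  have := congrFun h j
  simp only [Pi.add_apply, stdVec_apply, if_neg hj, eq_self_iff_true, if_true] at this
  split_ifs at this <;> simp_all

lemma sub_inj {n : ℕ} {i j j' : Fin n} (hj : j ≠ i) (h : stdVec n i - stdVec n j = stdVec n i - stdVec n j') :
    j = j' := by
  have := congrFun h j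
  simp only [Pi.sub_apply, stdVec_apply, if_neg hj, eq_self_iff_true, if_true] at this
  split_ifs at this <;> simp_all

/-- Number of inversions of `τ` at `i`: `#{j > i : τ j < τ i}`. -/
def lehmer {n : ℕ} (τ : Equiv.Perm (Fin n)) (i : Fin n) : ℕ :=
  (Finset.univ.filter fun j => i < j ∧ τ j < τ i).card

/-- Number of ascents of `τ` at `i`: `#{j > i : τ i < τ j}`. -/
def asc {n : ℕ} (τ : Equiv.Perm (Fin n)) (i : Fin n) : ℕ :=
  (Finset.univ.filter fun j => i < j ∧ τ i < τ j).card

lemma asc_add_lehmer {n : ℕ} (τ : Equiv.Perm (Fin n)) (i : Fin n) :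
    asc τ i + lehmer τ i = n - 1 - (i : ℕ) := by
  classical
  rw [asc, lehmer, ← Finset.card_union_of_disjoint]
  · have : (Finset.univ.filter fun j => i < j ∧ τ i < τ j) ∪
        (Finset.univ.filter fun j => i < j ∧ τ j < τ i)
        = Finset.univ.filter fun j => i < j := by
      rw [← Finset.filter_or]
      apply Finset.filter_congr
      intro j _
      constructor
      · rintro (⟨h, -⟩ | ⟨h, -⟩) <;> exact h
      · intro h
        rcases lt_or_gt_of_ne (fun he : τ i = τ j => h.ne (τ.injective he)) with h' | h'
        · exact Or.inl ⟨h, h'⟩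
        · exact Or.inr ⟨h, h'⟩
    rw [this]
    have : (Finset.univ.filter fun j => i < j) = Finset.Ioi i := by
      ext j; simp [Finset.mem_Ioi]
    rw [this, Fin.card_Ioi]
  · rw [Finset.disjoint_left]
    rintro a h1 h2
    rw [Finset.mem_filter] at h1 h2
    exact absurd h1.2.2 (asymm h2.2.2)

lemma invAt_eq {n : ℕ} (π : SignedPerm n) (i : Fin n) :
    invAt π i = (if π.sign (π.toPerm⁻¹ i) = -1 then 2 * asc π.toPerm⁻¹ i + 1 else 0)
      + lehmer π.toPerm⁻¹ i := by
  classical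
  set τ := π.toPerm⁻¹ with hτ
  set s := π.sign with hs
  have hsmem : ∀ m, s m = 1 ∨ s m = -1 := π.sign_mem
  have hτne : ∀ {a b : Fin n}, a ≠ b → τ a ≠ τ b := fun h hh => h (τ.injective hh)
  have E0 : (-(invAct π (stdVec n i)) ∈ posRoots n) ↔ s (τ i) = -1 := by
    rw [invAct_stdVec, ← neg_smul,
      single_mem_iff _ (by rcases hsmem (τ i) with h | h <;> simp [← hs, ← hτ, h])]
    rw [← hs, ← hτ]
    constructor <;> intro h <;> omega
  have Ep : ∀ j : Fin n, i ≠ j → ((-(invAct π (stdVec n i + stdVec n j)) ∈ posRoots n) ↔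
      (if τ i < τ j then s (τ i) = -1 else s (τ j) = -1)) := by
    intro j hij
    have hexp : -(invAct π (stdVec n i + stdVec n j))
        = (-(s (τ i))) • stdVec n (τ i) + (-(s (τ j))) • stdVec n (τ j) := by
      rw [invAct_add, invAct_stdVec, invAct_stdVec, neg_add, ← neg_smul, ← neg_smul, ← hτ, ← hs]
    rw [hexp, pair_mem_iff (hτne hij)
      (by rcases hsmem (τ i) with h | h <;> simp [h])
      (by rcases hsmem (τ j) with h | h <;> simp [h])]
    constructor <;> intro h <;> split_ifs at h ⊢ <;> omega
  have Em : ∀ j : Fin n, i ≠ j → ((-(invAct π (stdVec n i - stdVec n j)) ∈ posRoots n) ↔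
      (if τ i < τ j then s (τ i) = -1 else s (τ j) = 1)) := by
    intro j hij
    have hexp : -(invAct π (stdVec n i - stdVec n j))
        = (-(s (τ i))) • stdVec n (τ i) + (s (τ j)) • stdVec n (τ j) := by
      rw [invAct_sub, invAct_stdVec, invAct_stdVec, ← hτ, ← hs]
      funext m
      simp only [Pi.neg_apply, Pi.sub_apply, Pi.add_apply, Pi.smul_apply, smul_eq_mul]
      ring
    rw [hexp, pair_mem_iff (hτne hij)
      (by rcases hsmem (τ i) with h | h <;> simp [h])
      (by rcases hsmem (τ j) with h | h <;> simp [h])]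
    constructor <;> intro h <;> split_ifs at h ⊢ <;> omega
  have key : {v ∈ posRootsAt n i | -(invAct π v) ∈ posRoots n} =
      ↑((if s (τ i) = -1 then {stdVec n i} else (∅ : Finset (Fin n → ℤ)))
        ∪ (Finset.univ.filter fun j => i < j ∧
            (if τ i < τ j then s (τ i) = -1 else s (τ j) = -1)).image
            (fun j => stdVec n i + stdVec n j)
        ∪ (Finset.univ.filter fun j => i < j ∧
            (if τ i < τ j then s (τ i) = -1 else s (τ j) = 1)).image
            (fun j => stdVec n i - stdVec n j)) := by
    ext v
    simp only [Set.mem_setOf_eq, posRootsAt, Finset.coe_union, Set.mem_union, Finset.coe_image,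
      Set.mem_image, Finset.mem_coe, Finset.mem_filter, Finset.mem_univ, true_and]
    constructor
    · rintro ⟨(rfl | ⟨j, hij, rfl | rfl⟩), hcond⟩
      · left; left
        rw [if_pos (E0.mp hcond)]
        simp
      · left; right
        exact ⟨j, ⟨hij, (Ep j hij.ne).mp hcond⟩, rfl⟩
      · right
        exact ⟨j, ⟨hij, (Em j hij.ne).mp hcond⟩, rfl⟩
    · rintro ((hv | ⟨j, ⟨hij, hc⟩, rfl⟩) | ⟨j, ⟨hij, hc⟩, rfl⟩)
      · split_ifs at hv with h0
        · rw [Finset.mem_singleton] at hv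
          subst hv
          exact ⟨Or.inl rfl, E0.mpr h0⟩
        · simp at hv
      · exact ⟨Or.inr ⟨j, hij, Or.inl rfl⟩, (Ep j hij.ne).mpr hc⟩
      · exact ⟨Or.inr ⟨j, hij, Or.inr rfl⟩, (Em j hij.ne).mpr hc⟩
  rw [invAt, key, Set.ncard_coe_finset]
  rw [Finset.card_union_of_disjoint, Finset.card_union_of_disjoint]
  · rw [Finset.card_image_of_injOn (fun j hj j' hj' h =>
      add_inj (Finset.mem_filter.mp hj).2.1.ne' h),
      Finset.card_image_of_injOn (fun j hj j' hj' h =>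
      sub_inj (Finset.mem_filter.mp hj).2.1.ne' h)]
    rw [Finset.card_filter, Finset.card_filter, lehmer, asc, Finset.card_filter,
      Finset.card_filter]
    by_cases hC0 : s (τ i) = -1
    · rw [if_pos hC0, if_pos hC0, Finset.card_singleton]
      have hpt : ∀ j : Fin n, ((if i < j ∧ (if τ i < τ j then s (τ i) = -1 else s (τ j) = -1)
            then 1 else 0)
          + (if i < j ∧ (if τ i < τ j then s (τ i) = -1 else s (τ j) = 1) then 1 else 0) : ℕ)
          = 2 * (if i < j ∧ τ i < τ j then 1 else 0) + (if i < j ∧ τ j < τ i then 1 else 0) := by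
        intro j
        by_cases hij : i < j
        · rcases lt_trichotomy (τ i) (τ j) with ho | ho | ho
          · simp [hij, ho, asymm ho, hC0]
          · exact absurd ho (hτne hij.ne)
          · rcases hsmem (τ j) with h | h <;>
              simp [hij, ho, asymm ho, not_lt_of_gt ho, h]
        · simp [hij]
      have hsum := Finset.sum_congr rfl fun j (_ : j ∈ Finset.univ) => hpt j
      rw [Finset.sum_add_distrib, Finset.sum_add_distrib, ← Finset.mul_sum] at hsum
      omega
    · rw [if_neg hC0, if_neg hC0, Finset.card_empty]
      have hC1 : s (τ i) = 1 := by rcases hsmem (τ i) with h | h; exact h; exact absurd h hC0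
      have hpt : ∀ j : Fin n, ((if i < j ∧ (if τ i < τ j then s (τ i) = -1 else s (τ j) = -1)
            then 1 else 0)
          + (if i < j ∧ (if τ i < τ j then s (τ i) = -1 else s (τ j) = 1) then 1 else 0) : ℕ)
          = (if i < j ∧ τ j < τ i then 1 else 0) := by
        intro j
        by_cases hij : i < j
        · rcases lt_trichotomy (τ i) (τ j) with ho | ho | ho
          · simp [hij, ho, asymm ho, hC0, hC1]
          · exact absurd ho (hτne hij.ne)
          · rcases hsmem (τ j) with h | h <;>
              simp [hij, ho, asymm ho, not_lt_of_gt ho, h]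
        · simp [hij]
      have hsum := Finset.sum_congr rfl fun j (_ : j ∈ Finset.univ) => hpt j
      rw [Finset.sum_add_distrib] at hsum
      omega
  · -- disjointness of first with second
    rw [Finset.disjoint_left]
    rintro v hv hv'
    rw [Finset.mem_image] at hv'
    obtain ⟨j, hj, rfl⟩ := hv'
    split_ifs at hv
    · rw [Finset.mem_singleton] at hv
      exact stdVec_ne_add (Ne.symm ((Finset.mem_filter.mp hj).2.1.ne')) hv.symm
    · simp at hv
  · -- disjointness of (first ∪ second) with third
    rw [Finset.disjoint_left]
    rintro v hv hv'
    rw [Finset.mem_image] at hv'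
    obtain ⟨j, hj, rfl⟩ := hv'
    have hji : j ≠ i := (Finset.mem_filter.mp hj).2.1.ne'
    rw [Finset.mem_union] at hv
    rcases hv with hv | hv
    · split_ifs at hv
      · rw [Finset.mem_singleton] at hv
        exact stdVec_ne_sub (Ne.symm hji) hv.symm
      · simp at hv
    · rw [Finset.mem_image] at hv
      obtain ⟨j', hj', hee⟩ := hv
      exact add_ne_sub (Finset.mem_filter.mp hj').2.1.ne' hee

lemma invAt_le {n : ℕ} (π : SignedPerm n) (i : Fin n) :
    invAt π i ≤ 2 * (n - 1 - (i : ℕ)) + 1 := by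
  rw [invAt_eq]
  have h := asc_add_lehmer π.toPerm⁻¹ i
  split_ifs <;> omega

lemma val_eq_lehmer {n : ℕ} (τ : Equiv.Perm (Fin n)) (i : Fin n) :
    (τ i : ℕ) = (Finset.univ.filter fun j => j < i ∧ τ j < τ i).card + lehmer τ i := by
  classical
  have h1 : (Finset.univ.filter fun j => τ j < τ i) = (Finset.Iio (τ i)).map τ.symm.toEmbedding := by
    ext m
    simp only [Finset.mem_filter, Finset.mem_univ, true_and, Finset.mem_map, Finset.mem_Iio,
      Equiv.toEmbedding_apply]
    constructor
    · intro hm; exact ⟨τ m, hm, by simp⟩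
    · rintro ⟨v, hv, rfl⟩; simpa using hv
  have h2 : (τ i : ℕ) = (Finset.univ.filter fun j => τ j < τ i).card := by
    rw [h1, Finset.card_map, Fin.card_Iio]
  rw [h2, lehmer, Finset.card_filter, Finset.card_filter, Finset.card_filter,
    ← Finset.sum_add_distrib]
  apply Finset.sum_congr rfl
  intro j _
  rcases lt_trichotomy j i with h | h | h
  · simp [h, asymm h]
  · subst h; simp [lt_irrefl]
  · simp [h, asymm h]

lemma lehmer_not_lt {n : ℕ} (τ ρ : Equiv.Perm (Fin n)) (i : Fin n)
    (hL : lehmer τ i = lehmer ρ i) (hIH : ∀ j, j < i → τ j = ρ j) : ¬ (τ i < ρ i) := by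
  classical
  intro hlt
  set A := Finset.univ.filter fun j => j < i ∧ τ j < τ i with hA
  set B := Finset.univ.filter fun j => j < i ∧ τ j < ρ i with hB
  have e1 := val_eq_lehmer τ i
  have e2 := val_eq_lehmer ρ i
  have hset : (Finset.univ.filter fun j => j < i ∧ ρ j < ρ i) = B := by
    apply Finset.filter_congr
    intro j _
    constructor
    · rintro ⟨h1, h2⟩; exact ⟨h1, (hIH j h1) ▸ h2⟩
    · rintro ⟨h1, h2⟩; exact ⟨h1, (hIH j h1) ▸ h2⟩
  rw [hset] at e2
  have hAB : A ⊆ B := by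
    intro j hj
    rw [hA, Finset.mem_filter] at hj
    rw [hB, Finset.mem_filter]
    exact ⟨hj.1, hj.2.1, hj.2.2.trans hlt⟩
  have hcard : (B \ A).card + A.card = B.card := Finset.card_sdiff_add_card_eq_card hAB
  have hmap : (B \ A).card ≤ (Finset.Ioo (τ i) (ρ i)).card := by
    apply Finset.card_le_card_of_injOn (fun j => τ j)
    · intro j hj
      rw [Finset.mem_coe, Finset.mem_sdiff, hA, hB, Finset.mem_filter, Finset.mem_filter] at hj
      obtain ⟨⟨-, hji, hjρ⟩, hnA⟩ := hj
      have h3 : ¬ τ j < τ i := fun hc => hnA ⟨Finset.mem_univ j, hji, hc⟩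
      have h4 : τ j ≠ τ i := fun hc => hji.ne (τ.injective hc)
      rw [Finset.mem_coe, Finset.mem_Ioo]
      exact ⟨lt_of_le_of_ne (not_lt.mp h3) (Ne.symm h4), hjρ⟩
    · intro a _ b _ hab
      exact τ.injective hab
  rw [Fin.card_Ioo] at hmap
  rw [← hA] at e1
  have hlt' : (τ i : ℕ) < (ρ i : ℕ) := hlt
  omega

lemma lehmer_injective {n : ℕ} {τ ρ : Equiv.Perm (Fin n)} (h : ∀ i, lehmer τ i = lehmer ρ i) :
    τ = ρ := by
  have main : ∀ N : ℕ, ∀ i : Fin n, (i : ℕ) < N → τ i = ρ i := by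
    intro N
    induction N with
    | zero => intro i hi; omega
    | succ m IH =>
      intro i hi
      have IH' : ∀ j : Fin n, j < i → τ j = ρ j := by
        intro j hj
        have hj' : (j : ℕ) < (i : ℕ) := hj
        exact IH j (by omega)
      rcases lt_trichotomy (τ i) (ρ i) with hlt | heq | hgt
      · exact absurd hlt (lehmer_not_lt τ ρ i (h i) IH')
      · exact heq
      · exact absurd hgt (lehmer_not_lt ρ τ i (h i).symm (fun j hj => (IH' j hj).symm))
  exact Equiv.ext fun i => main ((i : ℕ) + 1) i (Nat.lt_succ_self _)

lemma ext_of_invAt {n : ℕ} {π π' : SignedPerm n} (h : ∀ i, invAt π i = invAt π' i) :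
    π = π' := by
  have hkey : ∀ i : Fin n, lehmer π.toPerm⁻¹ i = lehmer π'.toPerm⁻¹ i ∧
      ((π.sign (π.toPerm⁻¹ i) = -1) ↔ (π'.sign (π'.toPerm⁻¹ i) = -1)) := by
    intro i
    have h1 := h i
    rw [invAt_eq, invAt_eq] at h1
    have h2 := asc_add_lehmer π.toPerm⁻¹ i
    have h3 := asc_add_lehmer π'.toPerm⁻¹ i
    constructor
    · split_ifs at h1 <;> omega
    · by_cases hA : π.sign (π.toPerm⁻¹ i) = -1 <;>
        by_cases hB : π'.sign (π'.toPerm⁻¹ i) = -1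
      · exact iff_of_true hA hB
      · rw [if_pos hA, if_neg hB] at h1; exact absurd h1 (by omega)
      · rw [if_neg hA, if_pos hB] at h1; exact absurd h1 (by omega)
      · exact iff_of_false hA hB
  have hτ : π.toPerm⁻¹ = π'.toPerm⁻¹ := lehmer_injective (fun i => (hkey i).1)
  have hP : π.toPerm = π'.toPerm := inv_injective hτ
  have hS : π.sign = π'.sign := by
    funext m
    have h4 := (hkey (π.toPerm m)).2
    have h5 : π.toPerm⁻¹ (π.toPerm m) = m := by simp
    have h6 : π'.toPerm⁻¹ (π.toPerm m) = m := by rw [← hτ]; exact h5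
    rw [h5, h6] at h4
    rcases π.sign_mem m with hm | hm <;> rcases π'.sign_mem m with hm' | hm' <;>
      rw [hm, hm'] <;> rw [hm, hm'] at h4 <;> omega
  cases π; cases π'
  simp only [SignedPerm.mk.injEq]
  exact ⟨hP, hS⟩

def signedPermEquiv (n : ℕ) : SignedPerm n ≃ Equiv.Perm (Fin n) × (Fin n → Bool) where
  toFun π := (π.toPerm, fun i => decide (π.sign i = 1))
  invFun x := ⟨x.1, fun i => if x.2 i then 1 else -1, fun i => by
    by_cases h : x.2 i <;> simp [h]⟩
  left_inv π := by
    cases π with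
    | mk P S hS =>
      simp only [SignedPerm.mk.injEq, true_and]
      funext i
      rcases hS i with h | h <;> simp [h]
  right_inv x := by
    cases x with
    | mk P b =>
      refine Prod.ext rfl ?_
      funext i
      by_cases h : b i <;> simp [h]

noncomputable instance (n : ℕ) : Fintype (SignedPerm n) :=
  Fintype.ofEquiv _ (signedPermEquiv n).symm

lemma card_signedPerm (n : ℕ) : Fintype.card (SignedPerm n) = 2 ^ n * Nat.factorial n := by
  rw [Fintype.card_congr (signedPermEquiv n)]
  simp [Fintype.card_perm, mul_comm]

lemma digits_sum_lt {n : ℕ} (d : ℕ → ℕ) (hd : ∀ i, i < n → d i ≤ 2 * i + 1) :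
    ∑ i ∈ Finset.range n, d i * (2 ^ i * Nat.factorial i) < 2 ^ n * Nat.factorial n := by
  induction n with
  | zero => simp
  | succ m IH =>
    rw [Finset.sum_range_succ]
    have h1 := IH (fun i hi => hd i (hi.trans (Nat.lt_succ_self m)))
    have h2 : d m * (2 ^ m * Nat.factorial m) ≤ (2 * m + 1) * (2 ^ m * Nat.factorial m) :=
      Nat.mul_le_mul_right _ (hd m (Nat.lt_succ_self m))
    have hfac : 2 ^ (m + 1) * Nat.factorial (m + 1)
        = (2 * m + 1) * (2 ^ m * Nat.factorial m) + (2 ^ m * Nat.factorial m) := by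
      rw [Nat.factorial_succ, pow_succ]; ring
    omega

lemma digits_unique {n : ℕ} (d e : ℕ → ℕ) (hd : ∀ i, i < n → d i ≤ 2 * i + 1)
    (he : ∀ i, i < n → e i ≤ 2 * i + 1)
    (h : ∑ i ∈ Finset.range n, d i * (2 ^ i * Nat.factorial i)
       = ∑ i ∈ Finset.range n, e i * (2 ^ i * Nat.factorial i)) :
    ∀ i, i < n → d i = e i := by
  induction n with
  | zero => intro i hi; omega
  | succ m IH =>
    rw [Finset.sum_range_succ, Finset.sum_range_succ] at h
    have h1 := digits_sum_lt d (fun i hi => hd i (hi.trans (Nat.lt_succ_self m)))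
    have h2 := digits_sum_lt e (fun i hi => he i (hi.trans (Nat.lt_succ_self m)))
    have hdm : d m = e m := by
      by_contra hne
      rcases Nat.lt_or_ge (d m) (e m) with hlt | hge
      · have hstep : ∑ i ∈ Finset.range m, d i * (2 ^ i * Nat.factorial i)
              + d m * (2 ^ m * Nat.factorial m)
            < ∑ i ∈ Finset.range m, e i * (2 ^ i * Nat.factorial i)
              + e m * (2 ^ m * Nat.factorial m) := by
          calc _ < 2 ^ m * Nat.factorial m + d m * (2 ^ m * Nat.factorial m) := by omega
          _ = (d m + 1) * (2 ^ m * Nat.factorial m) := by ring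
          _ ≤ e m * (2 ^ m * Nat.factorial m) := Nat.mul_le_mul_right _ hlt
          _ ≤ _ := Nat.le_add_left _ _
        omega
      · have hlt : e m < d m := by omega
        have hstep : ∑ i ∈ Finset.range m, e i * (2 ^ i * Nat.factorial i)
              + e m * (2 ^ m * Nat.factorial m)
            < ∑ i ∈ Finset.range m, d i * (2 ^ i * Nat.factorial i)
              + d m * (2 ^ m * Nat.factorial m) := by
          calc _ < 2 ^ m * Nat.factorial m + e m * (2 ^ m * Nat.factorial m) := by omega
          _ = (e m + 1) * (2 ^ m * Nat.factorial m) := by ring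
          _ ≤ d m * (2 ^ m * Nat.factorial m) := Nat.mul_le_mul_right _ hlt
          _ ≤ _ := Nat.le_add_left _ _
        omega
    intro i hi
    rcases Nat.lt_or_ge i m with him | him
    · exact IH (fun k hk => hd k (hk.trans (Nat.lt_succ_self m)))
        (fun k hk => he k (hk.trans (Nat.lt_succ_self m))) (by rw [hdm] at h; omega) i him
    · have : i = m := by omega
      subst this
      exact hdm

noncomputable def digitFn {n : ℕ} (π : SignedPerm n) (k : ℕ) : ℕ :=
  if h : k < n then invAt π (Fin.rev ⟨k, h⟩) else 0

lemma digitFn_bound {n : ℕ} (π : SignedPerm n) : ∀ k, k < n → digitFn π k ≤ 2 * k + 1 := by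
  intro k hk
  rw [digitFn, dif_pos hk]
  have h1 := invAt_le π (Fin.rev ⟨k, hk⟩)
  have h2 : ((Fin.rev (⟨k, hk⟩ : Fin n)) : ℕ) = n - (k + 1) := Fin.val_rev _
  rw [h2] at h1
  omega

lemma code_eq_digit_sum {n : ℕ} (π : SignedPerm n) :
    ∑ i : Fin n, invAt π i.rev * (2 ^ (i : ℕ) * Nat.factorial (i : ℕ))
      = ∑ i ∈ Finset.range n, digitFn π i * (2 ^ i * Nat.factorial i) := by
  rw [← Fin.sum_univ_eq_sum_range (fun i => digitFn π i * (2 ^ i * Nat.factorial i)) n]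
  apply Finset.sum_congr rfl
  intro i _
  have h2 : (⟨(i : ℕ), i.isLt⟩ : Fin n) = i := Fin.eta i i.isLt
  rw [digitFn, dif_pos i.isLt, h2]

theorem hyperoctahedral_code_bijective (n : ℕ) :
    Set.BijOn
      (fun π : SignedPerm n =>
        ∑ i : Fin n, invAt π i.rev * (2 ^ (i : ℕ) * Nat.factorial (i : ℕ)))
      Set.univ (Set.Iio (2 ^ n * Nat.factorial n)) := by
  classical
  set f : SignedPerm n → ℕ :=
    fun π => ∑ i : Fin n, invAt π i.rev * (2 ^ (i : ℕ) * Nat.factorial (i : ℕ)) with hf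
  have hlt : ∀ π : SignedPerm n, f π < 2 ^ n * Nat.factorial n := by
    intro π
    rw [hf]
    simp only
    rw [code_eq_digit_sum π]
    exact digits_sum_lt (digitFn π) (digitFn_bound π)
  have hinj : Function.Injective f := by
    intro π π' hEq
    rw [hf] at hEq
    simp only at hEq
    rw [code_eq_digit_sum π, code_eq_digit_sum π'] at hEq
    have hD := digits_unique (digitFn π) (digitFn π') (digitFn_bound π) (digitFn_bound π') hEq
    apply ext_of_invAt
    intro j
    have hj : ((Fin.rev j : Fin n) : ℕ) < n := (Fin.rev j).isLt
    have h2 : Fin.rev (⟨((Fin.rev j : Fin n) : ℕ), hj⟩ : Fin n) = j := by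
      rw [Fin.eta]
      exact Fin.rev_rev j
    have h3 := hD ((Fin.rev j : Fin n) : ℕ) hj
    rw [digitFn, digitFn, dif_pos hj, dif_pos hj, h2] at h3
    exact h3
  refine ⟨fun π _ => Set.mem_Iio.mpr (hlt π), hinj.injOn, ?_⟩
  intro m hm
  rw [Set.mem_Iio] at hm
  have hcard : (Finset.univ.image f).card = 2 ^ n * Nat.factorial n := by
    rw [Finset.card_image_of_injective _ hinj, Finset.card_univ, card_signedPerm]
  have hsub : Finset.univ.image f ⊆ Finset.range (2 ^ n * Nat.factorial n) := by
    intro x hx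
    rw [Finset.mem_image] at hx
    obtain ⟨π, -, rfl⟩ := hx
    exact Finset.mem_range.mpr (hlt π)
  have heq : Finset.univ.image f = Finset.range (2 ^ n * Nat.factorial n) :=
    Finset.eq_of_subset_of_card_le hsub (by rw [hcard, Finset.card_range])
  have hmem : m ∈ Finset.univ.image f := heq ▸ Finset.mem_range.mpr hm
  rw [Finset.mem_image] at hmem
  obtain ⟨π, -, hπ⟩ := hmem
  exact ⟨π, Set.mem_univ π, hπ⟩
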